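/- Fix k ≥ 1 and a sequence z^∞ over a finite alphabet 𝒵, and let M^∞ = (M_1, M_2, …) be drawn iid Bernoulli(1/2). Then P(M^∞ ∈ 𝓜_k(z^∞)) = 0; that is, almost surely there do NOT exist a bounded sequence of nonnegative integer partition lengths {L_i} and a limiting distribution p̂ of the associated k-partition triples satisfying E_p̂[L] > H_p̂(M^L | z^k) + 1. -/

import Mathlib

open MeasureTheory ProbabilityTheory Filter
open scoped ENNReal

/-- Partial sums of the partition lengths: `partSum L i = L_1 + ⋯ + L_i`. -/
def partSum (L : ℕ → ℕ) (i : ℕ) : ℕ := ∑ j ∈ Finset.range i, L j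

/-- The `i`-th triple of the `k`-partition of `(M, w)` according to the partition lengths
`L`: the length `L i`, the `i`-th `M`-block (the `L i` source bits starting after the
first `L_1 + ⋯ + L_i` ones), and the `i`-th `k`-block of the side-information sequence
`w`. -/
def kTriple {𝒲 : Type*} (k : ℕ) (w : ℕ → 𝒲) (M : ℕ → Bool) (L : ℕ → ℕ) (i : ℕ) :
    ℕ × List Bool × (Fin k → 𝒲) :=
  (L i,
   List.ofFn (fun t : Fin (L i) => M (partSum L i + (t : ℕ))),
   fun t : Fin k => w (k * i + (t : ℕ)))

/-- First-order empirical distribution of the first `n` terms of a sequence `f`. -/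
noncomputable def empDist {T : Type*} [DecidableEq T] (f : ℕ → T) (n : ℕ) (t : T) : ℝ :=
  (((Finset.range n).filter (fun i => f i = t)).card : ℝ) / (n : ℝ)

/-- Base-2 Shannon entropy of a distribution on an arbitrary type, via `tsum`. -/
noncomputable def entT {T : Type*} (q : T → ℝ) : ℝ :=
  ∑' t, -(q t * Real.logb 2 (q t))

/-- Membership in the paper's set `𝓜_k(w^∞)`: a binary sequence `M` belongs to it iff
there exist a bounded sequence of nonnegative integer partition lengths `L` and a
limiting distribution `phat` (a probability distribution arising as the pointwise limit,
along some subsequence of times, of the first-order empirical distributions of the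
`k`-partition triples) such that `E_phat[L] > H_phat(M-block | w-block) + 1`, where the
conditional entropy is `H(M-block, w-block) − H(w-block)` under `phat`. -/
def MemMk {𝒲 : Type*} [DecidableEq 𝒲] (k : ℕ) (w : ℕ → 𝒲) (M : ℕ → Bool) : Prop :=
  ∃ (B : ℕ) (L : ℕ → ℕ), (∀ i, L i ≤ B) ∧
    ∃ (φ : ℕ → ℕ) (phat : ℕ × List Bool × (Fin k → 𝒲) → ℝ),
      StrictMono φ ∧
      (∀ t, Tendsto (fun j => empDist (kTriple k w M L) (φ j) t) atTop (nhds (phat t))) ∧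
      (∀ t, 0 ≤ phat t) ∧ HasSum phat 1 ∧
      (∑' t : ℕ × List Bool × (Fin k → 𝒲), phat t * (t.1 : ℝ)) >
        (entT (fun mw : List Bool × (Fin k → 𝒲) => ∑' l : ℕ, phat (l, mw.1, mw.2))
          - entT (fun v : Fin k → 𝒲 => ∑' lm : ℕ × List Bool, phat (lm.1, lm.2, v))) + 1

namespace Lem4

def SB (B : ℕ) : Finset (List Bool) :=
  (Finset.range (B+1)).biUnion (fun l => (Finset.univ : Finset (Fin l → Bool)).image List.ofFn)

lemma mem_SB {B : ℕ} {a : List Bool} : a ∈ SB B ↔ a.length ≤ B := by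
  constructor
  · intro h
    rcases Finset.mem_biUnion.1 h with ⟨l, hl, ha⟩
    rcases Finset.mem_image.1 ha with ⟨v, _, rfl⟩
    simpa [List.length_ofFn] using Nat.lt_succ_iff.1 (Finset.mem_range.1 hl)
  · intro h
    refine Finset.mem_biUnion.2 ⟨a.length, Finset.mem_range.2 (Nat.lt_succ_of_le h), ?_⟩
    exact Finset.mem_image.2 ⟨fun i => a.get i, Finset.mem_univ _, List.ofFn_get a⟩

def cnt {β : Type*} [DecidableEq β] (f : ℕ → β) (n : ℕ) (b : β) : ℕ :=
  ((Finset.range n).filter (fun i => f i = b)).card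

lemma empDist_def {T : Type*} [DecidableEq T] (f : ℕ → T) (n : ℕ) (t : T) :
    empDist f n t = (cnt f n t : ℝ) / n := rfl

lemma cnt_le {β : Type*} [DecidableEq β] (f : ℕ → β) (n : ℕ) (b : β) : cnt f n b ≤ n := by
  simpa [cnt] using Finset.card_le_card (Finset.filter_subset _ (Finset.range n))

lemma cnt_pos {β : Type*} [DecidableEq β] (f : ℕ → β) {n i : ℕ} (hi : i < n) :
    0 < cnt f n (f i) :=
  Finset.card_pos.2 ⟨i, Finset.mem_filter.2 ⟨Finset.mem_range.2 hi, rfl⟩⟩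

lemma sum_group {β : Type*} [DecidableEq β] (f : ℕ → β) (n : ℕ) (s : Finset β)
    (hs : ∀ i < n, f i ∈ s) (g : β → ℝ) :
    ∑ i ∈ Finset.range n, g (f i) = ∑ b ∈ s, (cnt f n b : ℝ) * g b := by
  rw [← Finset.sum_fiberwise_of_maps_to (g := f) (fun i hi => hs i (Finset.mem_range.1 hi))
    (fun i => g (f i))]
  refine Finset.sum_congr rfl fun b _ => ?_
  rw [Finset.sum_congr rfl (fun i hi => ?_), Finset.sum_const, nsmul_eq_mul]
  · rfl
  · exact congrArg g ((Finset.mem_filter.1 hi).2)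

lemma cnt_sum {β : Type*} [DecidableEq β] (f : ℕ → β) (n : ℕ) (s : Finset β)
    (hs : ∀ i < n, f i ∈ s) : ∑ b ∈ s, (cnt f n b : ℝ) = n := by
  have := sum_group f n s hs (fun _ => 1)
  simpa using this.symm

variable {𝒵 : Type*} [Fintype 𝒵] [DecidableEq 𝒵]

def wblk (z : ℕ → 𝒵) (k : ℕ) (i : ℕ) : Fin k → 𝒵 := fun t => z (k * i + t)

def TB (𝒵 : Type*) [Fintype 𝒵] (k B : ℕ) : Finset (ℕ × List Bool × (Fin k → 𝒵)) :=
  (Finset.range (B+1)) ×ˢ (SB B) ×ˢ (Finset.univ : Finset (Fin k → 𝒵))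

def trip (z : ℕ → 𝒵) (k : ℕ) {B n : ℕ} (m : Fin n → ↥(SB B)) (i : ℕ) :
    ℕ × List Bool × (Fin k → 𝒵) :=
  if h : i < n then (((m ⟨i,h⟩ : List Bool)).length, (m ⟨i,h⟩ : List Bool), wblk z k i)
  else (0, [], wblk z k i)

lemma trip_lt (z : ℕ → 𝒵) (k : ℕ) {B n : ℕ} (m : Fin n → ↥(SB B)) {i : ℕ} (h : i < n) :
    trip z k m i = (((m ⟨i,h⟩ : List Bool)).length, (m ⟨i,h⟩ : List Bool), wblk z k i) :=
  dif_pos h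

lemma trip_snd (z : ℕ → 𝒵) (k : ℕ) {B n : ℕ} (m : Fin n → ↥(SB B)) (i : ℕ) :
    (trip z k m i).2.2 = wblk z k i := by
  unfold trip; split <;> rfl

lemma trip_mem (z : ℕ → 𝒵) (k : ℕ) {B n : ℕ} (m : Fin n → ↥(SB B)) {i : ℕ} (h : i < n) :
    trip z k m i ∈ TB 𝒵 k B := by
  rw [trip_lt z k m h]
  refine Finset.mem_product.2 ⟨?_, Finset.mem_product.2 ⟨(m ⟨i,h⟩).2, Finset.mem_univ _⟩⟩
  exact Finset.mem_range.2 (Nat.lt_succ_of_le (mem_SB.1 (m ⟨i,h⟩).2))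

lemma cnt_trip_len (z : ℕ → 𝒵) (k : ℕ) {B n : ℕ} (m : Fin n → ↥(SB B))
    {l : ℕ} {a : List Bool} {w : Fin k → 𝒵} (hla : l ≠ a.length) :
    cnt (trip z k m) n (l, a, w) = 0 := by
  rw [cnt, Finset.card_eq_zero, Finset.filter_eq_empty_iff]
  intro i hi
  rw [trip_lt z k m (Finset.mem_range.1 hi)]
  intro hc
  apply hla
  have h1 := congrArg Prod.fst hc
  have h2 := congrArg (fun p => p.2.1) hc
  simp at h1 h2
  rw [← h1, ← h2]

def Sm {B n : ℕ} (m : Fin n → ↥(SB B)) : ℕ := ∑ i, ((m i : List Bool)).length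

noncomputable def eta (x : ℝ) : ℝ := -(x * Real.logb 2 x)

lemma eta_zero : eta 0 = 0 := by simp [eta]

noncomputable def Phi (𝒵 : Type*) [Fintype 𝒵] (k B : ℕ)
    (q : ℕ × List Bool × (Fin k → 𝒵) → ℝ) : ℝ :=
  ∑ t ∈ TB 𝒵 k B, q t * (t.1 : ℝ)

noncomputable def Psi (𝒵 : Type*) [Fintype 𝒵] (k B : ℕ)
    (q : ℕ × List Bool × (Fin k → 𝒵) → ℝ) : ℝ :=
  (∑ p ∈ (SB B) ×ˢ (Finset.univ : Finset (Fin k → 𝒵)), eta (q (p.1.length, p.1, p.2)))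
  - ∑ w : Fin k → 𝒵, eta (∑ lm ∈ (Finset.range (B+1)) ×ˢ SB B, q (lm.1, lm.2, w))

end Lem4

namespace Lem4
set_option linter.unusedSectionVars false
section Main
variable {𝒵 : Type*} [Fintype 𝒵] [DecidableEq 𝒵] (z : ℕ → 𝒵) (k B n : ℕ)
  (m : Fin n → ↥(SB B))

lemma phi_eq (hn : 0 < n) :
    (n : ℝ) * Phi 𝒵 k B (empDist (trip z k m) n) = (Sm m : ℝ) := by
  have hn' : (n:ℝ) ≠ 0 := Nat.cast_ne_zero.2 hn.ne'
  have h1 : (n : ℝ) * Phi 𝒵 k B (empDist (trip z k m) n)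
      = ∑ t ∈ TB 𝒵 k B, (cnt (trip z k m) n t : ℝ) * (t.1 : ℝ) := by
    rw [Phi, Finset.mul_sum]
    refine Finset.sum_congr rfl fun t _ => ?_
    rw [empDist_def]; field_simp
  rw [h1, ← sum_group (trip z k m) n (TB 𝒵 k B)
    (fun i hi => trip_mem z k m hi) (fun t => (t.1 : ℝ))]
  have h2 : ∀ i ∈ Finset.range n, ((trip z k m i).1 : ℝ)
      = (fun i : ℕ => if h : i < n then (((m ⟨i,h⟩ : List Bool)).length : ℝ) else 0) i := by
    intro i hi
    have hi' := Finset.mem_range.1 hi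
    rw [trip_lt z k m hi']
    simp [hi']
  rw [Finset.sum_congr rfl h2]
  rw [Sm, Nat.cast_sum, ← Fin.sum_univ_eq_sum_range
    (fun i => if h : i < n then (((m ⟨i,h⟩ : List Bool)).length : ℝ) else 0) n]
  try refine Finset.sum_congr rfl fun i _ => ?_
  try simp [i.2]

lemma marg_w (w : Fin k → 𝒵) :
    ∑ lm ∈ (Finset.range (B+1)) ×ˢ SB B, cnt (trip z k m) n (lm.1, lm.2, w)
      = cnt (wblk z k) n w := by
  rw [cnt, Finset.card_eq_sum_card_fiberwise
    (f := fun i => ((trip z k m i).1, (trip z k m i).2.1))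
    (t := (Finset.range (B+1)) ×ˢ SB B) ?_]
  · refine Finset.sum_congr rfl fun lm _ => ?_
    rw [cnt]
    congr 1
    ext i
    simp only [Finset.mem_filter, Finset.mem_range, Prod.ext_iff, trip_snd]
    tauto
  · intro i hi
    have hi' := Finset.mem_range.1 (Finset.mem_filter.1 hi).1
    have := trip_mem z k m hi'
    rw [TB] at this
    have h1 := (Finset.mem_product.1 this).1
    have h2 := (Finset.mem_product.1 (Finset.mem_product.1 this).2).1
    exact Finset.mem_product.2 ⟨h1, h2⟩

lemma psi_first :
    ∑ p ∈ (SB B) ×ˢ (Finset.univ : Finset (Fin k → 𝒵)),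
        eta (empDist (trip z k m) n (p.1.length, p.1, p.2))
      = ∑ t ∈ TB 𝒵 k B, eta (empDist (trip z k m) n t) := by
  have hinj : ∀ p ∈ (SB B) ×ˢ (Finset.univ : Finset (Fin k → 𝒵)),
      ∀ p' ∈ (SB B) ×ˢ (Finset.univ : Finset (Fin k → 𝒵)),
      (fun p : List Bool × (Fin k → 𝒵) => ((p.1.length, p.1, p.2) : ℕ × List Bool × (Fin k → 𝒵))) p
        = (fun p : List Bool × (Fin k → 𝒵) => ((p.1.length, p.1, p.2) : ℕ × List Bool × (Fin k → 𝒵))) p' → p = p' := by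
    rintro ⟨a, w⟩ _ ⟨a', w'⟩ _ h
    simp only [Prod.ext_iff] at h
    exact Prod.ext h.2.1 h.2.2
  have himg := Finset.sum_image (s := (SB B) ×ˢ (Finset.univ : Finset (Fin k → 𝒵)))
    (f := fun t => eta (empDist (trip z k m) n t))
    (g := fun p : List Bool × (Fin k → 𝒵) => ((p.1.length, p.1, p.2) : ℕ × List Bool × (Fin k → 𝒵))) hinj
  refine Eq.trans himg.symm ?_
  refine Finset.sum_subset ?_ ?_
  · intro t ht
    rcases Finset.mem_image.1 ht with ⟨⟨a, w⟩, hp, rfl⟩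
    have ha := (Finset.mem_product.1 hp).1
    exact Finset.mem_product.2 ⟨Finset.mem_range.2 (Nat.lt_succ_of_le (mem_SB.1 ha)),
      Finset.mem_product.2 ⟨ha, Finset.mem_univ _⟩⟩
  · rintro ⟨l, a, w⟩ ht hni
    have ha := (Finset.mem_product.1 (Finset.mem_product.1 ht).2).1
    have hla : l ≠ a.length := by
      intro h
      exact hni (Finset.mem_image.2 ⟨(a, w), Finset.mem_product.2 ⟨ha, Finset.mem_univ _⟩,
        by simp [h]⟩)
    rw [empDist_def, cnt_trip_len z k m hla]
    simpa using eta_zero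

end Main
end Lem4

namespace Lem4
set_option linter.unusedSectionVars false
section Main2
variable {𝒵 : Type*} [Fintype 𝒵] [DecidableEq 𝒵] (z : ℕ → 𝒵) (k B n : ℕ)
  (m : Fin n → ↥(SB B))

lemma n_eta {n : ℕ} (hn : 0 < n) (c : ℕ) :
    (n:ℝ) * eta ((c:ℝ)/n) = c * Real.logb 2 n - c * Real.logb 2 c := by
  have hn' : (n:ℝ) ≠ 0 := Nat.cast_ne_zero.2 hn.ne'
  rcases Nat.eq_zero_or_pos c with rfl | hc
  · simp [eta]
  · have hc' : (c:ℝ) ≠ 0 := Nat.cast_ne_zero.2 hc.ne'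
    rw [eta, Real.logb_div hc' hn']
    field_simp
    ring

lemma eta_sum {β : Type*} [DecidableEq β] (f : ℕ → β) {n : ℕ} (s : Finset β)
    (hs : ∀ i < n, f i ∈ s) (hn : 0 < n) :
    ∑ b ∈ s, (n:ℝ) * eta ((cnt f n b : ℝ)/n)
      = n * Real.logb 2 n - ∑ b ∈ s, (cnt f n b : ℝ) * Real.logb 2 (cnt f n b) := by
  rw [Finset.sum_congr rfl (fun b _ => n_eta hn (cnt f n b)), Finset.sum_sub_distrib,
    ← Finset.sum_mul, cnt_sum f n s hs]

lemma psi_eq (hn : 0 < n) :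
    (n : ℝ) * Psi 𝒵 k B (empDist (trip z k m) n)
      = (∑ w : Fin k → 𝒵, (cnt (wblk z k) n w : ℝ) * Real.logb 2 (cnt (wblk z k) n w))
        - ∑ t ∈ TB 𝒵 k B, (cnt (trip z k m) n t : ℝ) * Real.logb 2 (cnt (trip z k m) n t) := by
  have hmw : ∀ w : Fin k → 𝒵,
      ∑ lm ∈ (Finset.range (B+1)) ×ˢ SB B, empDist (trip z k m) n (lm.1, lm.2, w)
        = (cnt (wblk z k) n w : ℝ) / n := by
    intro w
    simp only [empDist_def]
    rw [← Finset.sum_div]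
    congr 1
    rw [← Nat.cast_sum]
    exact_mod_cast congrArg (Nat.cast : ℕ → ℝ) (marg_w z k B n m w)
  rw [Psi, psi_first, mul_sub, Finset.mul_sum, Finset.mul_sum]
  simp only [hmw]
  simp only [empDist_def]
  rw [eta_sum (trip z k m) (TB 𝒵 k B) (fun i hi => trip_mem z k m hi) hn,
    eta_sum (wblk z k) Finset.univ (fun i _ => Finset.mem_univ _) hn]
  ring

end Main2
end Lem4

namespace Lem4
set_option linter.unusedSectionVars false
section Main3
variable {𝒵 : Type*} [Fintype 𝒵] [DecidableEq 𝒵] (z : ℕ → 𝒵) (k B n : ℕ)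

open Classical in
noncomputable def Bad : Finset (Fin n → ↥(SB B)) :=
  Finset.univ.filter (fun m =>
    Psi 𝒵 k B (empDist (trip z k m) n) + 1 < Phi 𝒵 k B (empDist (trip z k m) n))

noncomputable def Gm (m : Fin n → ↥(SB B)) : ℝ :=
  ∏ i ∈ Finset.range n,
    ((cnt (trip z k m) n (trip z k m i) : ℝ) / (cnt (wblk z k) n (wblk z k i) : ℝ))

variable (m : Fin n → ↥(SB B))

lemma Gm_factor_pos {i : ℕ} (hi : i < n) :
    0 < (cnt (trip z k m) n (trip z k m i) : ℝ) / (cnt (wblk z k) n (wblk z k i) : ℝ) :=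
  div_pos (by exact_mod_cast cnt_pos (trip z k m) hi)
    (by exact_mod_cast cnt_pos (wblk z k) hi)

lemma Gm_pos : 0 < Gm z k B n m :=
  Finset.prod_pos (fun i hi => Gm_factor_pos z k B n m (Finset.mem_range.1 hi))

lemma logb_Gm :
    Real.logb 2 (Gm z k B n m)
      = (∑ t ∈ TB 𝒵 k B, (cnt (trip z k m) n t : ℝ) * Real.logb 2 (cnt (trip z k m) n t))
        - ∑ w : Fin k → 𝒵, (cnt (wblk z k) n w : ℝ) * Real.logb 2 (cnt (wblk z k) n w) := by
  rw [Gm, Real.logb_prod _ _ (fun i hi =>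
    (Gm_factor_pos z k B n m (Finset.mem_range.1 hi)).ne')]
  have h : ∀ i ∈ Finset.range n,
      Real.logb 2 ((cnt (trip z k m) n (trip z k m i) : ℝ) / (cnt (wblk z k) n (wblk z k i) : ℝ))
        = Real.logb 2 (cnt (trip z k m) n (trip z k m i))
          - Real.logb 2 (cnt (wblk z k) n (wblk z k i)) := by
    intro i hi
    have hi' := Finset.mem_range.1 hi
    exact Real.logb_div (by exact_mod_cast (cnt_pos (trip z k m) hi').ne')
      (by exact_mod_cast (cnt_pos (wblk z k) hi').ne')
  rw [Finset.sum_congr rfl h, Finset.sum_sub_distrib]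
  congr 1
  · exact sum_group (trip z k m) n (TB 𝒵 k B) (fun i hi => trip_mem z k m hi)
      (fun t => Real.logb 2 (cnt (trip z k m) n t))
  · exact sum_group (wblk z k) n Finset.univ (fun i _ => Finset.mem_univ _)
      (fun w => Real.logb 2 (cnt (wblk z k) n w))

lemma bad_bound (hn : 0 < n) (hm : m ∈ Bad z k B n) :
    ((1:ℝ)/2)^(Sm m) ≤ ((1:ℝ)/2)^n * Gm z k B n m := by
  have hn' : (0:ℝ) < n := Nat.cast_pos.2 hn
  have hineq : Psi 𝒵 k B (empDist (trip z k m) n) + 1 < Phi 𝒵 k B (empDist (trip z k m) n) := by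
    have := Finset.mem_filter.1 hm
    exact this.2
  have hmul := mul_lt_mul_of_pos_left hineq hn'
  rw [mul_add, mul_one, phi_eq z k B n m hn, psi_eq z k B n m hn] at hmul
  -- hmul : n * Psi-val + n < Sm, where n * Psi-val = C - A
  have hlog : (n:ℝ) - (Sm m : ℝ) ≤ Real.logb 2 (Gm z k B n m) := by
    rw [logb_Gm]
    linarith [hmul]
  -- now convert
  have h2 : (1:ℝ) < 2 := one_lt_two
  have hG := Gm_pos z k B n m
  have hGr : Gm z k B n m = (2:ℝ) ^ (Real.logb 2 (Gm z k B n m)) :=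
    (Real.rpow_logb two_pos (by norm_num) hG).symm
  have key : (2:ℝ) ^ (-(Sm m : ℝ)) ≤ (2:ℝ) ^ (-(n:ℝ) + Real.logb 2 (Gm z k B n m)) := by
    apply Real.rpow_le_rpow_of_exponent_le (le_of_lt h2)
    linarith
  have e1 : ((1:ℝ)/2)^(Sm m) = (2:ℝ) ^ (-(Sm m : ℝ)) := by
    rw [Real.rpow_neg (by norm_num), Real.rpow_natCast]
    simp [one_div, inv_pow]
  have e2 : ((1:ℝ)/2)^n * Gm z k B n m = (2:ℝ) ^ (-(n:ℝ) + Real.logb 2 (Gm z k B n m)) := by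
    rw [Real.rpow_add two_pos, Real.rpow_neg (by norm_num), Real.rpow_natCast, ← hGr]
    simp [one_div, inv_pow]
  rw [e1, e2]
  exact key

end Main3
end Lem4

namespace Lem4
set_option linter.unusedSectionVars false
section Main4
variable {𝒵 : Type*} [Fintype 𝒵] [DecidableEq 𝒵] (z : ℕ → 𝒵) (k B n : ℕ)

def prq (m : Fin n → ↥(SB B)) (i : ℕ) : ↥(SB B) × (Fin k → 𝒵) :=
  if h : i < n then (m ⟨i,h⟩, wblk z k i)
  else (⟨[], mem_SB.2 (Nat.zero_le B)⟩, wblk z k i)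

lemma prq_snd (m : Fin n → ↥(SB B)) (i : ℕ) : (prq z k B n m i).2 = wblk z k i := by
  unfold prq; split <;> rfl

lemma cnt_trip_prq (m : Fin n → ↥(SB B)) {i : ℕ} (hi : i < n) :
    cnt (trip z k m) n (trip z k m i) = cnt (prq z k B n m) n (prq z k B n m i) := by
  unfold cnt
  congr 1
  ext i'
  simp only [Finset.mem_filter, Finset.mem_range]
  refine and_congr_right fun hi' => ?_
  rw [trip_lt z k m hi, trip_lt z k m hi', prq, prq, dif_pos hi, dif_pos hi']
  simp only [Prod.ext_iff, Subtype.ext_iff]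
  constructor
  · rintro ⟨h1, h2, h3⟩; exact ⟨h2, h3⟩
  · rintro ⟨h2, h3⟩; exact ⟨by rw [h2], h2, h3⟩

noncomputable def Gm' (c : ↥(SB B) × (Fin k → 𝒵) → Fin (n+1)) (m : Fin n → ↥(SB B)) : ℝ :=
  ∏ i : Fin n, ((c (m i, wblk z k (i : ℕ)) : ℕ) : ℝ) / (cnt (wblk z k) n (wblk z k (i : ℕ)) : ℝ)

def tau (m : Fin n → ↥(SB B)) : ↥(SB B) × (Fin k → 𝒵) → Fin (n+1) :=
  fun p => ⟨cnt (prq z k B n m) n p, Nat.lt_succ_of_le (cnt_le _ _ _)⟩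

lemma Gm_eq_Gm' (m : Fin n → ↥(SB B)) : Gm z k B n m = Gm' z k B n (tau z k B n m) m := by
  rw [Gm, Gm']
  rw [← Fin.prod_univ_eq_prod_range (fun i =>
    ((cnt (trip z k m) n (trip z k m i) : ℝ) / (cnt (wblk z k) n (wblk z k i) : ℝ))) n]
  refine Finset.prod_congr rfl fun i _ => ?_
  congr 1
  rw [cnt_trip_prq z k B n m i.2]
  have : prq z k B n m (i : ℕ) = (m i, wblk z k (i : ℕ)) := by
    rw [prq, dif_pos i.2]
  rw [this, tau]

lemma tau_marginal (m : Fin n → ↥(SB B)) (w : Fin k → 𝒵) :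
    ∑ a : ↥(SB B), cnt (prq z k B n m) n (a, w) = cnt (wblk z k) n w := by
  simp only [cnt]
  rw [Finset.card_eq_sum_card_fiberwise
    (f := fun i => (prq z k B n m i).1) (t := Finset.univ) (fun i _ => Finset.mem_univ _)]
  refine (Finset.sum_congr rfl fun a _ => ?_).symm
  congr 1
  ext i
  simp only [Finset.mem_filter, Finset.mem_range, Prod.ext_iff, prq_snd]
  tauto

lemma sum_Gm'_le (c : ↥(SB B) × (Fin k → 𝒵) → Fin (n+1))
    (hc : ∃ m', c = tau z k B n m') :
    ∑ m ∈ Finset.univ.filter (fun m => tau z k B n m = c), Gm' z k B n c m ≤ 1 := by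
  rcases hc with ⟨m', rfl⟩
  have h1 : ∑ m ∈ Finset.univ.filter (fun m => tau z k B n m = tau z k B n m'),
      Gm' z k B n (tau z k B n m') m ≤ ∑ m : Fin n → ↥(SB B), Gm' z k B n (tau z k B n m') m := by
    apply Finset.sum_le_sum_of_subset_of_nonneg (Finset.filter_subset _ _)
    intro m _ _
    exact Finset.prod_nonneg fun i _ => div_nonneg (Nat.cast_nonneg _) (Nat.cast_nonneg _)
  refine h1.trans ?_
  have h2 : ∑ m : Fin n → ↥(SB B), Gm' z k B n (tau z k B n m') m
      = ∏ i : Fin n, ∑ a : ↥(SB B),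
          ((tau z k B n m' (a, wblk z k (i:ℕ)) : ℕ) : ℝ) / (cnt (wblk z k) n (wblk z k (i:ℕ)) : ℝ) := by
    rw [Finset.prod_univ_sum]
    rw [← Fintype.piFinset_univ]
    rfl
  rw [h2]
  apply Finset.prod_le_one
  · intro i _
    exact Finset.sum_nonneg fun a _ => div_nonneg (Nat.cast_nonneg _) (Nat.cast_nonneg _)
  · intro i _
    rw [← Finset.sum_div]
    apply div_le_one_of_le₀
    · have : ∑ a : ↥(SB B), ((tau z k B n m' (a, wblk z k (i:ℕ)) : ℕ) : ℝ)
          = ((∑ a : ↥(SB B), cnt (prq z k B n m') n (a, wblk z k (i:ℕ)) : ℕ) : ℝ) := by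
        rw [Nat.cast_sum]; rfl
      rw [this, tau_marginal]
    · exact Nat.cast_nonneg _
end Main4
end Lem4

namespace Lem4
set_option linter.unusedSectionVars false
section Main5
variable {𝒵 : Type*} [Fintype 𝒵] [DecidableEq 𝒵] (z : ℕ → 𝒵) (k B n : ℕ)

lemma count_bound :
    ∑ m ∈ Bad z k B n, Gm z k B n m
      ≤ ((n+1 : ℕ) : ℝ) ^ (Fintype.card (↥(SB B) × (Fin k → 𝒵))) := by
  classical
  have h0 : ∑ m ∈ Bad z k B n, Gm z k B n m ≤ ∑ m : Fin n → ↥(SB B), Gm z k B n m := by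
    apply Finset.sum_le_sum_of_subset_of_nonneg (Finset.subset_univ _)
    intro m _ _
    exact le_of_lt (Gm_pos z k B n m)
  refine h0.trans ?_
  rw [← Finset.sum_fiberwise_of_maps_to (g := tau z k B n)
    (fun m _ => Finset.mem_image_of_mem _ (Finset.mem_univ m)) (Gm z k B n)]
  have h1 : ∀ c ∈ Finset.univ.image (tau z k B n),
      ∑ m ∈ Finset.univ.filter (fun m => tau z k B n m = c), Gm z k B n m ≤ 1 := by
    intro c hc
    rcases Finset.mem_image.1 hc with ⟨m', _, rfl⟩
    have : ∀ m ∈ Finset.univ.filter (fun m => tau z k B n m = tau z k B n m'),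
        Gm z k B n m = Gm' z k B n (tau z k B n m') m := by
      intro m hm
      rw [Gm_eq_Gm', (Finset.mem_filter.1 hm).2]
    rw [Finset.sum_congr rfl this]
    exact sum_Gm'_le z k B n _ ⟨m', rfl⟩
  calc ∑ c ∈ Finset.univ.image (tau z k B n),
        ∑ m ∈ Finset.univ.filter (fun m => tau z k B n m = c), Gm z k B n m
      ≤ ∑ _c ∈ Finset.univ.image (tau z k B n), (1:ℝ) := Finset.sum_le_sum h1
    _ = ((Finset.univ.image (tau z k B n)).card : ℝ) := by rw [Finset.sum_const]; simp
    _ ≤ ((n+1 : ℕ) : ℝ) ^ (Fintype.card (↥(SB B) × (Fin k → 𝒵))) := by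
        have := Finset.card_le_univ (Finset.univ.image (tau z k B n))
        have hcard : Fintype.card ((↥(SB B) × (Fin k → 𝒵)) → Fin (n+1))
            = (n+1) ^ (Fintype.card (↥(SB B) × (Fin k → 𝒵))) := by
          rw [Fintype.card_fun, Fintype.card_fin]
        calc ((Finset.univ.image (tau z k B n)).card : ℝ)
            ≤ (Fintype.card ((↥(SB B) × (Fin k → 𝒵)) → Fin (n+1)) : ℝ) := by
              exact_mod_cast this
          _ = _ := by rw [hcard]; push_cast; ring

lemma main_estimate (hn : 0 < n) :
    ∑ m ∈ Bad z k B n, ((1:ℝ)/2)^(Sm m)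
      ≤ ((1:ℝ)/2)^n * ((n+1 : ℕ) : ℝ) ^ (Fintype.card (↥(SB B) × (Fin k → 𝒵))) := by
  calc ∑ m ∈ Bad z k B n, ((1:ℝ)/2)^(Sm m)
      ≤ ∑ m ∈ Bad z k B n, ((1:ℝ)/2)^n * Gm z k B n m :=
        Finset.sum_le_sum (fun m hm => bad_bound z k B n m hn hm)
    _ = ((1:ℝ)/2)^n * ∑ m ∈ Bad z k B n, Gm z k B n m := by rw [Finset.mul_sum]
    _ ≤ _ := by
        apply mul_le_mul_of_nonneg_left (count_bound z k B n)
        positivity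

lemma bad_zero : Bad z k B 0 = ∅ := by
  rw [Bad, Finset.filter_eq_empty_iff]
  intro m _
  have hq : ∀ t, empDist (trip z k m) 0 t = 0 := by
    intro t
    rw [empDist_def]
    simp
  simp only [Phi, Psi, hq]
  rw [Finset.sum_const_zero]
  simp [eta_zero, Finset.sum_const_zero]

end Main5
end Lem4

namespace Lem4

-- L1: probability of a fixed bit pattern
lemma prob_pattern {Ω : Type*} [MeasurableSpace Ω] (μ : Measure Ω) [IsProbabilityMeasure μ]
    (M : ℕ → Ω → Bool) (hMmeas : ∀ i, Measurable (M i))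
    (hMindep : iIndepFun M μ)
    (hMbern : ∀ i, μ {ω | M i ω = true} = 1/2)
    (S : ℕ) (b : ℕ → Bool) :
    μ {ω | ∀ j : Fin S, M j ω = b j} = (1/2 : ENNReal)^S := by
  have hhalf : ∀ i (c : Bool), μ {ω | M i ω = c} = 1/2 := by
    intro i c
    cases c
    · have hmt : MeasurableSet {ω | M i ω = true} := by
        have h2 := (hMmeas i) (MeasurableSet.singleton true)
        have : (M i) ⁻¹' {true} = {ω | M i ω = true} := rfl
        rwa [this] at h2
      have : {ω | M i ω = false} = {ω | M i ω = true}ᶜ := by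
        ext ω; simp [Set.mem_setOf_eq, Set.mem_compl_iff]
      rw [this, measure_compl hmt (measure_ne_top μ _), hMbern i, measure_univ]
      rw [ENNReal.sub_eq_of_eq_add (by norm_num)]
      rw [← ENNReal.inv_two_add_inv_two]
      norm_num
    · exact hMbern i
  have hset : {ω | ∀ j : Fin S, M j ω = b j}
      = ⋂ j ∈ Finset.range S, (M j) ⁻¹' {b j} := by
    ext ω
    simp only [Set.mem_setOf_eq, Set.mem_iInter, Set.mem_preimage, Set.mem_singleton_iff,
      Finset.mem_range]
    exact ⟨fun h j hj => h ⟨j, hj⟩, fun h j => h j j.2⟩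
  rw [hset, hMindep.meas_biInter (fun i _ => ⟨{b i}, MeasurableSet.singleton _, rfl⟩)]
  have : ∀ j, μ ((M j) ⁻¹' {b j}) = 1/2 := fun j => hhalf j (b j)
  rw [Finset.prod_congr rfl (fun j _ => this j), Finset.prod_const, Finset.card_range]

set_option linter.unusedSectionVars false
section Main6
variable {𝒵 : Type*} [Fintype 𝒵] [DecidableEq 𝒵] (z : ℕ → 𝒵) (k B n : ℕ)

def flat {B n : ℕ} (m : Fin n → ↥(SB B)) : List Bool :=
  (List.ofFn (fun i => (m i : List Bool))).flatten

def Ev {Ω : Type*} (M : ℕ → Ω → Bool) : Set Ω :=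
  ⋃ m ∈ Bad z k B n, {ω | ∀ j : Fin (Sm m), M j ω = (flat m).getD j false}

variable {Ω : Type*} [MeasurableSpace Ω] (μ : Measure Ω) [IsProbabilityMeasure μ]
  (M : ℕ → Ω → Bool)

lemma Ev_bound (hMmeas : ∀ i, Measurable (M i))
    (hMindep : iIndepFun M μ)
    (hMbern : ∀ i, μ {ω | M i ω = true} = 1/2) :
    μ (Ev z k B n M) ≤ ENNReal.ofReal (((1:ℝ)/2)^n
      * ((n+1 : ℕ) : ℝ) ^ (Fintype.card (↥(SB B) × (Fin k → 𝒵)))) := by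
  rcases Nat.eq_zero_or_pos n with rfl | hn
  · rw [Ev, bad_zero]
    simp
  calc μ (Ev z k B n M) ≤ ∑ m ∈ Bad z k B n,
        μ {ω | ∀ j : Fin (Sm m), M j ω = (flat m).getD j false} :=
      measure_biUnion_finset_le _ _
    _ = ∑ m ∈ Bad z k B n, ENNReal.ofReal (((1:ℝ)/2)^(Sm m)) := by
        refine Finset.sum_congr rfl fun m _ => ?_
        rw [prob_pattern μ M hMmeas hMindep hMbern (Sm m) (fun j => (flat m).getD j false)]
        have h12 : ENNReal.ofReal ((1:ℝ)/2) = 1/2 := by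
          rw [ENNReal.ofReal_div_of_pos (by norm_num)]
          simp [ENNReal.ofReal_one, ENNReal.ofReal_ofNat]
        rw [ENNReal.ofReal_pow (by norm_num : (0:ℝ) ≤ 1/2), h12]
    _ = ENNReal.ofReal (∑ m ∈ Bad z k B n, ((1:ℝ)/2)^(Sm m)) := by
        rw [ENNReal.ofReal_sum_of_nonneg (fun m _ => by positivity)]
    _ ≤ _ := ENNReal.ofReal_le_ofReal (main_estimate z k B n hn)

lemma Ev_frequently_null (hMmeas : ∀ i, Measurable (M i))
    (hMindep : iIndepFun M μ)
    (hMbern : ∀ i, μ {ω | M i ω = true} = 1/2) :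
    μ {ω | ∃ᶠ n in atTop, ω ∈ Ev z k B n M} = 0 := by
  apply measure_setOf_frequently_eq_zero
  set D := Fintype.card (↥(SB B) × (Fin k → 𝒵)) with hD
  have hf : Summable (fun n : ℕ => ((n:ℝ))^D * ((1:ℝ)/2)^n) := by
    apply summable_pow_mul_geometric_of_norm_lt_one
    rw [Real.norm_eq_abs]
    rw [abs_of_pos]
    norm_num
    norm_num
  have hf1 : Summable (fun n : ℕ => (((n+1):ℝ))^D * ((1:ℝ)/2)^(n+1)) := by
    have := (summable_nat_add_iff 1).2 hf
    simpa using this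
  have hr : Summable (fun n : ℕ => ((1:ℝ)/2)^n * ((n+1 : ℕ) : ℝ)^D) := by
    have h2 := hf1.mul_left 2
    apply Summable.congr h2
    intro n
    push_cast
    ring
  have hsum : ∑' n, ENNReal.ofReal (((1:ℝ)/2)^n * ((n+1 : ℕ) : ℝ)^D) ≠ ⊤ := by
    rw [← ENNReal.ofReal_tsum_of_nonneg (fun n => by positivity) hr]
    exact ENNReal.ofReal_ne_top
  refine ne_top_of_le_ne_top hsum (ENNReal.tsum_le_tsum fun n => ?_)
  exact Ev_bound z k B n μ M hMmeas hMindep hMbern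

end Main6
end Lem4




namespace Lem4
lemma join_blocks (f : ℕ → Bool) (L : ℕ → ℕ) (n : ℕ) :
    (List.ofFn fun i : Fin n => List.ofFn fun t : Fin (L i) => f (partSum L i + t)).flatten
      = List.ofFn fun j : Fin (partSum L n) => f (j : ℕ) := by
  induction n with
  | zero => simp [partSum]
  | succ n ih =>
    rw [List.ofFn_succ']
    have hS : partSum L (n+1) = partSum L n + L n := Finset.sum_range_succ L n
    rw [List.concat_eq_append, List.flatten_append]
    simp only [Fin.coe_castSucc] at *
    rw [ih]
    have := List.ofFn_add (f := fun j : Fin (partSum L n + L n) => f (j : ℕ))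
      (n := partSum L n) (m := L n)
    simp only [Fin.coe_castLE, Fin.coe_natAdd] at this
    rw [hS] -- goal: ofFn .. ++ join [ofFn block n] = ofFn over partSum L n + L n
    rw [this]
    simp [Fin.last]


set_option linter.unusedSectionVars false
section PartB
variable {𝒵 : Type*} [Fintype 𝒵] [DecidableEq 𝒵] (z : ℕ → 𝒵) (k B : ℕ)
  (Mω : ℕ → Bool) (L : ℕ → ℕ) (hLB : ∀ i, L i ≤ B)

/-- the realized block sequence -/
def mr (n : ℕ) : Fin n → ↥(SB B) := fun i =>
  ⟨List.ofFn (fun t : Fin (L (i : ℕ)) => Mω (partSum L (i : ℕ) + (t : ℕ))),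
    mem_SB.2 (by simpa using hLB (i : ℕ))⟩

lemma trip_mr (n : ℕ) {i : ℕ} (hi : i < n) :
    trip z k (mr B Mω L hLB n) i = kTriple k z Mω L i := by
  rw [trip_lt z k _ hi, kTriple]
  refine Prod.ext ?_ (Prod.ext rfl rfl)
  simp [mr, List.length_ofFn]

lemma empDist_mr (n : ℕ) (t : ℕ × List Bool × (Fin k → 𝒵)) :
    empDist (trip z k (mr B Mω L hLB n)) n t = empDist (kTriple k z Mω L) n t := by
  rw [empDist, empDist]
  congr 2
  exact congrArg Finset.card (Finset.filter_congr fun i hi => by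
    rw [trip_mr z k B Mω L hLB n (Finset.mem_range.1 hi)])

lemma Sm_mr (n : ℕ) : Sm (mr B Mω L hLB n) = partSum L n := by
  rw [Sm, partSum, ← Fin.sum_univ_eq_sum_range (fun i => L i) n]
  refine Finset.sum_congr rfl fun i _ => ?_
  simp [mr, List.length_ofFn]

lemma flat_mr (n : ℕ) :
    flat (mr B Mω L hLB n) = List.ofFn (fun j : Fin (partSum L n) => Mω (j : ℕ)) := by
  rw [flat]
  exact join_blocks Mω L n

lemma match_mr (n : ℕ) (j : Fin (Sm (mr B Mω L hLB n))) :
    Mω j = (flat (mr B Mω L hLB n)).getD j false := by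
  have hj : (j : ℕ) < partSum L n :=
    lt_of_lt_of_le j.2 (Sm_mr B Mω L hLB n).le
  rw [flat_mr B Mω L hLB n]
  have hlen : (j : ℕ) < (List.ofFn (fun j : Fin (partSum L n) => Mω (j : ℕ))).length := by
    rwa [List.length_ofFn]
  rw [List.getD_eq_getElem _ _ hlen, List.getElem_ofFn]

end PartB
end Lem4

namespace Lem4
set_option linter.unusedSectionVars false
section PartB2
variable {𝒵 : Type*} [Fintype 𝒵] [DecidableEq 𝒵] (z : ℕ → 𝒵) (k B : ℕ)
  (Mω : ℕ → Bool) (L : ℕ → ℕ)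

lemma kTriple_mem (hLB : ∀ i, L i ≤ B) (i : ℕ) : kTriple k z Mω L i ∈ TB 𝒵 k B := by
  rw [kTriple, TB]
  refine Finset.mem_product.2 ⟨Finset.mem_range.2 (Nat.lt_succ_of_le (hLB i)),
    Finset.mem_product.2 ⟨mem_SB.2 ?_, Finset.mem_univ _⟩⟩
  simpa using hLB i

lemma emp_kTriple_vanish (hLB : ∀ i, L i ≤ B) {t : ℕ × List Bool × (Fin k → 𝒵)}
    (ht : t ∉ TB 𝒵 k B) (n : ℕ) : empDist (kTriple k z Mω L) n t = 0 := by
  rw [empDist]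
  have : (Finset.range n).filter (fun i => kTriple k z Mω L i = t) = ∅ := by
    rw [Finset.filter_eq_empty_iff]
    intro i _ hc
    exact ht (hc ▸ kTriple_mem z k B Mω L hLB i)
  rw [this]
  simp

lemma emp_kTriple_len {l : ℕ} {a : List Bool} {w : Fin k → 𝒵}
    (hla : l ≠ a.length) (n : ℕ) : empDist (kTriple k z Mω L) n (l, a, w) = 0 := by
  rw [empDist]
  have : (Finset.range n).filter (fun i => kTriple k z Mω L i = (l, a, w)) = ∅ := by
    rw [Finset.filter_eq_empty_iff]
    intro i _ hc
    apply hla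
    have h1 := congrArg Prod.fst hc
    have h2 := congrArg (fun p => p.2.1) hc
    simp only [kTriple] at h1 h2
    rw [← h1, ← h2, List.length_ofFn]
  rw [this]
  simp

variable (φ : ℕ → ℕ) (phat : ℕ × List Bool × (Fin k → 𝒵) → ℝ)

lemma phat_vanish
    (hconv : ∀ t, Tendsto (fun j => empDist (kTriple k z Mω L) (φ j) t) atTop (nhds (phat t)))
    (hLB : ∀ i, L i ≤ B) {t : ℕ × List Bool × (Fin k → 𝒵)}
    (ht : t ∉ TB 𝒵 k B) : phat t = 0 := by
  refine tendsto_nhds_unique (hconv t) ?_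
  have : (fun j => empDist (kTriple k z Mω L) (φ j) t) = (fun _ => (0:ℝ)) := by
    funext j; exact emp_kTriple_vanish z k B Mω L hLB ht (φ j)
  rw [this]
  exact tendsto_const_nhds

lemma phat_len
    (hconv : ∀ t, Tendsto (fun j => empDist (kTriple k z Mω L) (φ j) t) atTop (nhds (phat t)))
    {l : ℕ} {a : List Bool} {w : Fin k → 𝒵} (hla : l ≠ a.length) :
    phat (l, a, w) = 0 := by
  refine tendsto_nhds_unique (hconv (l, a, w)) ?_
  have : (fun j => empDist (kTriple k z Mω L) (φ j) (l, a, w)) = (fun _ => (0:ℝ)) := by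
    funext j; exact emp_kTriple_len z k Mω L hla (φ j)
  rw [this]
  exact tendsto_const_nhds

lemma tsum_E_eq
    (hconv : ∀ t, Tendsto (fun j => empDist (kTriple k z Mω L) (φ j) t) atTop (nhds (phat t)))
    (hLB : ∀ i, L i ≤ B) :
    (∑' t : ℕ × List Bool × (Fin k → 𝒵), phat t * (t.1 : ℝ)) = Phi 𝒵 k B phat := by
  rw [Phi]
  exact tsum_eq_sum (fun t ht => by
    rw [phat_vanish z k B Mω L φ phat hconv hLB ht, zero_mul])

lemma tsum_H_eq
    (hconv : ∀ t, Tendsto (fun j => empDist (kTriple k z Mω L) (φ j) t) atTop (nhds (phat t)))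
    (hLB : ∀ i, L i ≤ B) :
    (entT (fun mw : List Bool × (Fin k → 𝒵) => ∑' l : ℕ, phat (l, mw.1, mw.2))
      - entT (fun v : Fin k → 𝒵 => ∑' lm : ℕ × List Bool, phat (lm.1, lm.2, v)))
      = Psi 𝒵 k B phat := by
  have hmarg1 : ∀ mw : List Bool × (Fin k → 𝒵),
      (∑' l : ℕ, phat (l, mw.1, mw.2)) = phat (mw.1.length, mw.1, mw.2) := by
    intro mw
    exact tsum_eq_single _ (fun l hl => phat_len z k Mω L φ phat hconv hl)
  have h1 : entT (fun mw : List Bool × (Fin k → 𝒵) => ∑' l : ℕ, phat (l, mw.1, mw.2))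
      = ∑ p ∈ (SB B) ×ˢ (Finset.univ : Finset (Fin k → 𝒵)),
          eta (phat (p.1.length, p.1, p.2)) := by
    rw [entT]
    have : ∀ mw : List Bool × (Fin k → 𝒵),
        -( (∑' l : ℕ, phat (l, mw.1, mw.2)) * Real.logb 2 (∑' l : ℕ, phat (l, mw.1, mw.2)))
          = eta (phat (mw.1.length, mw.1, mw.2)) := by
      intro mw; rw [hmarg1 mw, eta]
    rw [tsum_congr this]
    refine tsum_eq_sum (fun p hp => ?_)
    have hp1 : p.1 ∉ SB B := by
      intro hmem
      exact hp (Finset.mem_product.2 ⟨hmem, Finset.mem_univ _⟩)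
    have : phat (p.1.length, p.1, p.2) = 0 := by
      apply phat_vanish z k B Mω L φ phat hconv hLB
      rw [TB]
      intro hc
      exact hp1 (Finset.mem_product.1 (Finset.mem_product.1 hc).2).1
    rw [this, eta_zero]
  have h2 : entT (fun v : Fin k → 𝒵 => ∑' lm : ℕ × List Bool, phat (lm.1, lm.2, v))
      = ∑ w : Fin k → 𝒵,
          eta (∑ lm ∈ (Finset.range (B+1)) ×ˢ SB B, phat (lm.1, lm.2, w)) := by
    have hmarg2 : ∀ v : Fin k → 𝒵,
        (∑' lm : ℕ × List Bool, phat (lm.1, lm.2, v))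
          = ∑ lm ∈ (Finset.range (B+1)) ×ˢ SB B, phat (lm.1, lm.2, v) := by
      intro v
      refine tsum_eq_sum (fun lm hlm => ?_)
      apply phat_vanish z k B Mω L φ phat hconv hLB
      rw [TB]
      intro hc
      apply hlm
      exact Finset.mem_product.2 ⟨(Finset.mem_product.1 hc).1,
        (Finset.mem_product.1 (Finset.mem_product.1 hc).2).1⟩
    rw [entT, tsum_congr (fun v => by rw [hmarg2 v, eta] :
      ∀ v : Fin k → 𝒵, -( (∑' lm : ℕ × List Bool, phat (lm.1, lm.2, v))
        * Real.logb 2 (∑' lm : ℕ × List Bool, phat (lm.1, lm.2, v)))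
        = eta (∑ lm ∈ (Finset.range (B+1)) ×ˢ SB B, phat (lm.1, lm.2, v)))]
    exact tsum_fintype _
  rw [h1, h2, Psi]

end PartB2
end Lem4

namespace Lem4
set_option linter.unusedSectionVars false
section PartB3
variable {𝒵 : Type*} [Fintype 𝒵] [DecidableEq 𝒵] (z : ℕ → 𝒵) (k B : ℕ)
  (Mω : ℕ → Bool) (L : ℕ → ℕ) (φ : ℕ → ℕ) (phat : ℕ × List Bool × (Fin k → 𝒵) → ℝ)

lemma continuous_eta : Continuous eta := by
  have h : eta = fun x => -((x * Real.log x) / Real.log 2) := by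
    funext x
    rw [eta, Real.logb]
    ring
  rw [h]
  exact ((Real.continuous_mul_log).div_const _).neg

lemma tendsto_Phi
    (hconv : ∀ t, Tendsto (fun j => empDist (kTriple k z Mω L) (φ j) t) atTop (nhds (phat t))) :
    Tendsto (fun j => Phi 𝒵 k B (empDist (kTriple k z Mω L) (φ j))) atTop
      (nhds (Phi 𝒵 k B phat)) := by
  simp only [Phi]
  exact tendsto_finset_sum _ (fun t _ => (hconv t).mul_const _)

lemma tendsto_Psi
    (hconv : ∀ t, Tendsto (fun j => empDist (kTriple k z Mω L) (φ j) t) atTop (nhds (phat t))) :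
    Tendsto (fun j => Psi 𝒵 k B (empDist (kTriple k z Mω L) (φ j))) atTop
      (nhds (Psi 𝒵 k B phat)) := by
  simp only [Psi]
  apply Tendsto.sub
  · exact tendsto_finset_sum _ (fun p _ =>
      ((continuous_eta.tendsto _).comp (hconv (p.1.length, p.1, p.2))))
  · exact tendsto_finset_sum _ (fun w _ =>
      ((continuous_eta.tendsto _).comp
        (tendsto_finset_sum _ (fun lm _ => hconv (lm.1, lm.2, w)))))

lemma partB (h : MemMk k z Mω) :
    ∃ B : ℕ, ∀ N : ℕ, ∃ n, N ≤ n ∧ ∃ m ∈ Bad z k B n,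
      ∀ j : Fin (Sm m), Mω j = (flat m).getD j false := by
  obtain ⟨B, L, hLB, φ, phat, hφ, hconv, hpos, hsum, hineq⟩ := h
  refine ⟨B, fun N => ?_⟩
  rw [tsum_E_eq z k B Mω L φ phat hconv hLB,
    tsum_H_eq z k B Mω L φ phat hconv hLB] at hineq
  have hPhi := tendsto_Phi z k B Mω L φ phat hconv
  have hPsi := tendsto_Psi z k B Mω L φ phat hconv
  have hsub := hPhi.sub hPsi
  have hev : ∀ᶠ j in atTop, 1 < Phi 𝒵 k B (empDist (kTriple k z Mω L) (φ j))
      - Psi 𝒵 k B (empDist (kTriple k z Mω L) (φ j)) :=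
    hsub.eventually (eventually_gt_nhds (by linarith))
  obtain ⟨j0, hj0⟩ := eventually_atTop.1 hev
  set n := φ (max N j0) with hn
  refine ⟨n, le_trans (le_max_left N j0) hφ.le_apply, mr B Mω L hLB n, ?_,
    fun j => match_mr B Mω L hLB n j⟩
  rw [Bad, Finset.mem_filter]
  refine ⟨Finset.mem_univ _, ?_⟩
  have hED : empDist (trip z k (mr B Mω L hLB n)) n = empDist (kTriple k z Mω L) n :=
    funext (empDist_mr z k B Mω L hLB n)
  rw [hED]
  have := hj0 (max N j0) (le_max_right N j0)
  linarith

end PartB3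
end Lem4

/-- The paper's Lemma 4. -/
theorem Mk_is_null
    {Ω : Type*} [MeasurableSpace Ω] (μ : Measure Ω) [IsProbabilityMeasure μ]
    {𝒵 : Type*} [Fintype 𝒵] [DecidableEq 𝒵] (z : ℕ → 𝒵) (k : ℕ) (hk : 1 ≤ k)
    (M : ℕ → Ω → Bool) (hMmeas : ∀ i, Measurable (M i))
    (hMindep : iIndepFun M μ)
    (hMbern : ∀ i, μ {ω | M i ω = true} = 1/2) :
    μ {ω | MemMk k z (fun i => M i ω)} = 0 := by
  have hsub : {ω | MemMk k z (fun i => M i ω)}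
      ⊆ ⋃ B : ℕ, {ω | ∃ᶠ n in atTop, ω ∈ Lem4.Ev z k B n M} := by
    intro ω hω
    obtain ⟨B, hB⟩ := Lem4.partB z k (fun i => M i ω) hω
    refine Set.mem_iUnion.2 ⟨B, ?_⟩
    rw [Set.mem_setOf_eq, frequently_atTop]
    intro N
    obtain ⟨n, hn, m, hm, hmatch⟩ := hB N
    exact ⟨n, hn, Set.mem_biUnion hm hmatch⟩
  refine measure_mono_null hsub ?_
  exact measure_iUnion_null fun B =>
    Lem4.Ev_frequently_null z k B μ M hMmeas hMindep hMbern
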